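/- Let H ∈ ℝ and C₀ > 0, and let v₁ : ℝ → ℝ be continuously differentiable with |v₁(t)| + |v₁'(t)| ≤ C₀ e^{−|t|} for all t ∈ ℝ. For ε > 0 set U_ε := v_⋆ + ε v₁ and λ_ε := − (1/ε) · ( ∫_ℝ t · U_ε'(t)² e^{−εHt} dt ) / ( ∫_ℝ U_ε'(t)² e^{−εHt} dt ). Then there exist ε₀ > 0 and Λ > 0, depending only on H and C₀, such that for all ε ∈ (0, ε₀) both integrals are finite, the denominator is positive, and |λ_ε| ≤ Λ. -/

import Mathlib

noncomputable section

open Real MeasureTheory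

/-- The Allen–Cahn heteroclinic `v⋆(t) = tanh(t/√2)`. -/
def vStar (t : ℝ) : ℝ := Real.tanh (t / Real.sqrt 2)

namespace Stmt12Aux

/-- The derivative of `vStar`. -/
def wAC (t : ℝ) : ℝ := (Real.sqrt 2)⁻¹ * (1 / Real.cosh (t / Real.sqrt 2) ^ 2)

lemma tanh_hasDerivAt (x : ℝ) : HasDerivAt Real.tanh (1 / Real.cosh x ^ 2) x := by
  have h := (Real.hasDerivAt_sinh x).div (Real.hasDerivAt_cosh x) (Real.cosh_pos x).ne'
  have : (Real.cosh x * Real.cosh x - Real.sinh x * Real.sinh x) / Real.cosh x ^ 2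
      = 1 / Real.cosh x ^ 2 := by
    rw [← sq, ← sq, Real.cosh_sq_sub_sinh_sq]
  rw [this] at h
  exact h.congr_of_eventuallyEq (by filter_upwards with y using (Real.tanh_eq_sinh_div_cosh y))

lemma vStar_hasDerivAt (t : ℝ) : HasDerivAt vStar (wAC t) t := by
  have h1 : HasDerivAt (fun x : ℝ => x / Real.sqrt 2) ((Real.sqrt 2)⁻¹) t := by
    simpa using (hasDerivAt_id t).div_const (Real.sqrt 2)
  have := (tanh_hasDerivAt (t / Real.sqrt 2)).comp t h1
  have hv : vStar = Real.tanh ∘ fun x => x / Real.sqrt 2 := rfl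
  rw [hv]; simpa [wAC, mul_comm] using this

lemma continuous_wAC : Continuous wAC := by
  apply Continuous.mul continuous_const
  apply Continuous.div continuous_const
  · exact (Real.continuous_cosh.comp (continuous_id.div_const _)).pow 2
  · intro t
    positivity

lemma sqrt2_facts : 1 ≤ Real.sqrt 2 ∧ Real.sqrt 2 ≤ 2 := by
  constructor <;> nlinarith [Real.sq_sqrt (by norm_num : (2:ℝ) ≥ 0), Real.sqrt_nonneg 2]

lemma cosh_ge_half_exp_abs (x : ℝ) : Real.exp |x| / 2 ≤ Real.cosh x := by
  rw [Real.cosh_eq]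
  rcases abs_cases x with ⟨h, _⟩ | ⟨h, _⟩ <;> rw [h] <;>
    nlinarith [Real.exp_pos x, Real.exp_pos (-x)]

lemma cosh_le_exp_abs (x : ℝ) : Real.cosh x ≤ Real.exp |x| := by
  rw [Real.cosh_eq]
  rcases abs_cases x with ⟨h, h'⟩ | ⟨h, h'⟩ <;> rw [h]
  · nlinarith [Real.exp_le_exp.mpr (by linarith : -x ≤ x)]
  · nlinarith [Real.exp_le_exp.mpr (by linarith : x ≤ -x)]

lemma wAC_nonneg (t : ℝ) : 0 ≤ wAC t := by
  unfold wAC; positivity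

lemma wAC_even (t : ℝ) : wAC (-t) = wAC t := by
  unfold wAC
  rw [neg_div, Real.cosh_neg]

lemma wAC_le (t : ℝ) : wAC t ≤ 4 * Real.exp (-|t|) := by
  obtain ⟨hs1, hs2⟩ := sqrt2_facts
  have hsp : (0:ℝ) < Real.sqrt 2 := by linarith
  have habs : |t / Real.sqrt 2| = |t| / Real.sqrt 2 := by
    rw [abs_div, abs_of_pos hsp]
  have hc : Real.exp (|t| / Real.sqrt 2) / 2 ≤ Real.cosh (t / Real.sqrt 2) := by
    rw [← habs]; exact cosh_ge_half_exp_abs _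
  have hsq : (Real.exp (|t| / Real.sqrt 2) / 2) ^ 2 ≤ Real.cosh (t / Real.sqrt 2) ^ 2 :=
    pow_le_pow_left₀ (by positivity) hc 2
  have h1 : 1 / Real.cosh (t / Real.sqrt 2) ^ 2 ≤ 1 / ((Real.exp (|t| / Real.sqrt 2) / 2) ^ 2) :=
    one_div_le_one_div_of_le (by positivity) hsq
  have h2 : 1 / ((Real.exp (|t| / Real.sqrt 2) / 2) ^ 2)
      = 4 * Real.exp (-(2 * (|t| / Real.sqrt 2))) := by
    rw [div_pow, sq, ← Real.exp_add, Real.exp_neg]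
    have := Real.exp_pos (|t| / Real.sqrt 2 + |t| / Real.sqrt 2)
    rw [two_mul]
    field_simp
    norm_num
  have h3 : Real.exp (-(2 * (|t| / Real.sqrt 2))) ≤ Real.exp (-|t|) := by
    apply Real.exp_le_exp.mpr
    rw [neg_le_neg_iff]
    rw [mul_div_assoc', le_div_iff₀ hsp]
    nlinarith [abs_nonneg t]
  have hinv : (Real.sqrt 2)⁻¹ ≤ 1 := by
    rw [inv_le_one_iff₀]; right; linarith
  unfold wAC
  calc (Real.sqrt 2)⁻¹ * (1 / Real.cosh (t / Real.sqrt 2) ^ 2)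
      ≤ 1 * (4 * Real.exp (-(2 * (|t| / Real.sqrt 2)))) := by
        rw [← h2]
        exact mul_le_mul hinv h1 (by positivity) one_pos.le
    _ ≤ 4 * Real.exp (-|t|) := by
        rw [one_mul]; nlinarith [h3]

lemma wAC_ge (t : ℝ) (ht : |t| ≤ 1) : 1/16 ≤ wAC t := by
  obtain ⟨hs1, hs2⟩ := sqrt2_facts
  have hsp : (0:ℝ) < Real.sqrt 2 := by linarith
  have habs : |t / Real.sqrt 2| = |t| / Real.sqrt 2 := by
    rw [abs_div, abs_of_pos hsp]
  have h1 : Real.cosh (t / Real.sqrt 2) ≤ Real.exp 1 := by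
    calc Real.cosh (t / Real.sqrt 2) ≤ Real.exp |t / Real.sqrt 2| := cosh_le_exp_abs _
      _ ≤ Real.exp 1 := by
          apply Real.exp_le_exp.mpr
          rw [habs, div_le_one hsp]
          linarith
  have he : Real.exp 1 < 2.7182818286 := Real.exp_one_lt_d9
  have hcp : 0 < Real.cosh (t / Real.sqrt 2) := Real.cosh_pos _
  have h2 : Real.cosh (t / Real.sqrt 2) ^ 2 ≤ 8 := by nlinarith
  have h3 : (1:ℝ)/8 ≤ 1 / Real.cosh (t / Real.sqrt 2) ^ 2 :=
    one_div_le_one_div_of_le (by positivity) h2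
  have hinv : (1:ℝ)/2 ≤ (Real.sqrt 2)⁻¹ := by
    have := one_div_le_one_div_of_le hsp hs2
    rwa [one_div (Real.sqrt 2)] at this
  unfold wAC
  nlinarith [Real.cosh_pos (t / Real.sqrt 2)]

lemma integrable_exp_neg_abs : Integrable (fun t : ℝ => Real.exp (-|t|)) := by
  have h1 : IntegrableOn (fun t : ℝ => Real.exp (-|t|)) (Set.Ioi 0) := by
    apply (exp_neg_integrableOn_Ioi 0 one_pos).congr_fun ?_ measurableSet_Ioi
    intro t ht
    simp [abs_of_pos (Set.mem_Ioi.mp ht)]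
  have h2 : IntegrableOn (fun t : ℝ => Real.exp (-|t|)) (Set.Iic 0) := by
    have : IntegrableOn Real.exp (Set.Iic 0) := integrableOn_exp_Iic 0
    apply this.congr_fun ?_ measurableSet_Iic
    intro t ht
    simp [abs_of_nonpos (Set.mem_Iic.mp ht)]
  have := h2.union h1
  rwa [Set.Iic_union_Ioi, integrableOn_univ] at this

lemma integrable_dom {f : ℝ → ℝ} (hf : Continuous f) {K : ℝ}
    (h : ∀ t, |f t| ≤ K * Real.exp (-|t|)) : Integrable f :=
  (integrable_exp_neg_abs.const_mul K).mono' hf.aestronglyMeasurable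
    (by filter_upwards with t; simpa using h t)

lemma abs_integral_dom {f : ℝ → ℝ} (hf : Integrable f) {K : ℝ}
    (h : ∀ t, |f t| ≤ K * Real.exp (-|t|)) :
    |∫ t, f t| ≤ K * ∫ t : ℝ, Real.exp (-|t|) := by
  calc |∫ t, f t| ≤ ∫ t, |f t| := by
        simpa [Real.norm_eq_abs] using norm_integral_le_integral_norm f
    _ ≤ ∫ t : ℝ, K * Real.exp (-|t|) :=
        integral_mono hf.abs (integrable_exp_neg_abs.const_mul K) h
    _ = K * ∫ t : ℝ, Real.exp (-|t|) := MeasureTheory.integral_const_mul _ _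

lemma self_le_four_exp {x : ℝ} (hx : 0 ≤ x) : x ≤ 4 * Real.exp (x / 4) := by
  nlinarith [Real.add_one_le_exp (x / 4)]

lemma abs_exp_sub_one_le' (x : ℝ) : |Real.exp x - 1| ≤ |x| * Real.exp |x| := by
  rcases le_or_gt 0 x with hx | hx
  · rw [abs_of_nonneg hx, abs_of_nonneg (sub_nonneg.mpr (Real.one_le_exp hx))]
    have h := Real.add_one_le_exp (-x)
    rw [Real.exp_neg] at h
    have hp := Real.exp_pos x
    have h2 : (1 - x) * Real.exp x ≤ 1 := by
      calc (1 - x) * Real.exp x ≤ (Real.exp x)⁻¹ * Real.exp x := by nlinarith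
        _ = 1 := inv_mul_cancel₀ hp.ne'
    nlinarith
  · rw [abs_of_neg hx, abs_of_nonpos (by nlinarith [Real.exp_lt_one_iff.mpr hx] : Real.exp x - 1 ≤ 0)]
    nlinarith [Real.add_one_le_exp x, Real.one_le_exp (by linarith : (0:ℝ) ≤ -x)]

lemma integral_odd_zero {f : ℝ → ℝ} (hodd : ∀ t, f (-t) = - f t) :
    ∫ t, f t = 0 := by
  have h := MeasureTheory.integral_neg_eq_self f (volume : Measure ℝ)
  have h2 : ∫ t, f (-t) = - ∫ t, f t := by
    simp_rw [hodd]; exact integral_neg f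
  linarith [h, h2, h.symm.trans h2]

lemma sq_exp_neg (x : ℝ) : Real.exp (-x) * Real.exp (-x) = Real.exp (-(2*x)) := by
  rw [← Real.exp_add]; ring_nf

lemma pe0 {x : ℝ} (hx : 0 ≤ x) : Real.exp (-(2*x)) * Real.exp (x/4) ≤ Real.exp (-x) := by
  rw [← Real.exp_add]; exact Real.exp_le_exp.mpr (by linarith)

lemma pe1 {x : ℝ} (hx : 0 ≤ x) :
    x * (Real.exp (-(2*x)) * Real.exp (x/4)) ≤ 4 * Real.exp (-x) := by
  have h := self_le_four_exp hx
  calc x * (Real.exp (-(2*x)) * Real.exp (x/4))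
      ≤ (4 * Real.exp (x/4)) * (Real.exp (-(2*x)) * Real.exp (x/4)) :=
        mul_le_mul_of_nonneg_right h (by positivity)
    _ = 4 * Real.exp (x/4 + (-(2*x) + x/4)) := by rw [Real.exp_add, Real.exp_add]; ring
    _ ≤ 4 * Real.exp (-x) := by
        have := Real.exp_le_exp.mpr (show x/4 + (-(2*x) + x/4) ≤ -x by linarith)
        linarith

lemma pe2 {x : ℝ} (hx : 0 ≤ x) :
    x * (x * (Real.exp (-(2*x)) * Real.exp (x/4))) ≤ 16 * Real.exp (-x) := by
  have h := self_le_four_exp hx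
  have hx2 : x * x ≤ 16 * (Real.exp (x/4) * Real.exp (x/4)) := by nlinarith [Real.exp_pos (x/4)]
  calc x * (x * (Real.exp (-(2*x)) * Real.exp (x/4)))
      = (x * x) * (Real.exp (-(2*x)) * Real.exp (x/4)) := by ring
    _ ≤ (16 * (Real.exp (x/4) * Real.exp (x/4))) * (Real.exp (-(2*x)) * Real.exp (x/4)) :=
        mul_le_mul_of_nonneg_right hx2 (by positivity)
    _ = 16 * Real.exp (x/4 + (x/4 + (-(2*x) + x/4))) := by
        rw [Real.exp_add, Real.exp_add, Real.exp_add]; ring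
    _ ≤ 16 * Real.exp (-x) := by
        have := Real.exp_le_exp.mpr (show x/4 + (x/4 + (-(2*x) + x/4)) ≤ -x by linarith)
        linarith

end Stmt12Aux

open Stmt12Aux

set_option maxHeartbeats 2000000 in
theorem stmt12 (H C₀ : ℝ) (hC₀ : 0 < C₀) :
    ∃ ε₀ : ℝ, 0 < ε₀ ∧ ∃ Λ : ℝ, 0 < Λ ∧
      ∀ v₁ : ℝ → ℝ, ContDiff ℝ 1 v₁ →
        (∀ t : ℝ, |v₁ t| + |deriv v₁ t| ≤ C₀ * Real.exp (-|t|)) →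
        ∀ ε : ℝ, ε ∈ Set.Ioo 0 ε₀ →
          Integrable
            (fun t : ℝ => (deriv (fun x => vStar x + ε * v₁ x) t) ^ 2 *
              Real.exp (-(ε * H * t))) ∧
          Integrable
            (fun t : ℝ => t * (deriv (fun x => vStar x + ε * v₁ x) t) ^ 2 *
              Real.exp (-(ε * H * t))) ∧
          (0 < ∫ t : ℝ, (deriv (fun x => vStar x + ε * v₁ x) t) ^ 2 *
              Real.exp (-(ε * H * t))) ∧
          |(-(1 / ε)) *
              ((∫ t : ℝ, t * (deriv (fun x => vStar x + ε * v₁ x) t) ^ 2 *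
                  Real.exp (-(ε * H * t))) /
                (∫ t : ℝ, (deriv (fun x => vStar x + ε * v₁ x) t) ^ 2 *
                  Real.exp (-(ε * H * t))))| ≤ Λ := by
  set J : ℝ := ∫ t : ℝ, Real.exp (-|t|) with hJ
  have hJ0 : 0 ≤ J := integral_nonneg fun t => (Real.exp_pos _).le
  refine ⟨min (min 1 ((4*(|H|+1))⁻¹)) ((32*C₀)⁻¹), by positivity,
    1024 * ((256*|H| + (32*C₀ + 4*C₀^2)) * J) + 1, by positivity, ?_⟩
  intro v₁ hv₁ hv₁b ε ⟨hε0, hεlt⟩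
  -- basic epsilon bounds
  have hε1 : ε ≤ 1 := le_trans (le_of_lt hεlt) (le_trans (min_le_left _ _) (min_le_left _ _))
  have hεH : ε * |H| ≤ 1/4 := by
    have h := lt_of_lt_of_le hεlt (le_trans (min_le_left _ _) (min_le_right _ _))
    rw [inv_eq_one_div, lt_div_iff₀ (by positivity)] at h
    nlinarith [abs_nonneg H]
  have hεC : ε * C₀ ≤ 1/32 := by
    have h := lt_of_lt_of_le hεlt (min_le_right _ _)
    rw [inv_eq_one_div, lt_div_iff₀ (by positivity)] at h
    nlinarith
  -- derivative rewriting
  have hv₁d : Differentiable ℝ v₁ := hv₁.differentiable one_ne_zero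
  have hderiv : ∀ t, deriv (fun x => vStar x + ε * v₁ x) t = wAC t + ε * deriv v₁ t := by
    intro t
    exact ((vStar_hasDerivAt t).add (((hv₁d t).hasDerivAt).const_mul ε)).deriv
  have hdb : ∀ t, |deriv v₁ t| ≤ C₀ * Real.exp (-|t|) := fun t =>
    le_trans (le_add_of_nonneg_left (abs_nonneg _)) (hv₁b t)
  have hcontd : Continuous (deriv v₁) := hv₁.continuous_deriv le_rfl
  set d : ℝ → ℝ := deriv v₁ with hd
  set dv : ℝ → ℝ := fun t => wAC t + ε * d t with hdv
  have hcontdv : Continuous dv := continuous_wAC.add (continuous_const.mul hcontd)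
  set E : ℝ → ℝ := fun t => Real.exp (-(ε * H * t)) with hE
  have hcontE : Continuous E := Real.continuous_exp.comp (by fun_prop)
  have hEpos : ∀ t, 0 < E t := fun t => Real.exp_pos _
  have hEle : ∀ t, E t ≤ Real.exp (|t|/4) := by
    intro t
    apply Real.exp_le_exp.mpr
    have h1 : -(ε * H * t) ≤ |ε * H * t| := neg_le_abs _
    have h2 : |ε * H * t| = ε * |H| * |t| := by
      rw [abs_mul, abs_mul, abs_of_pos hε0]
    nlinarith [abs_nonneg t, h1, h2.le, h2.ge, hεH, abs_nonneg (H*t)]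
  have hEsub : ∀ t, |E t - 1| ≤ ε * |H| * |t| * Real.exp (|t|/4) := by
    intro t
    have h1 := abs_exp_sub_one_le' (-(ε * H * t))
    rw [abs_neg] at h1
    have h2 : |ε * H * t| = ε * |H| * |t| := by
      rw [abs_mul, abs_mul, abs_of_pos hε0]
    rw [h2] at h1
    refine h1.trans ?_
    apply mul_le_mul_of_nonneg_left _ (by positivity)
    apply Real.exp_le_exp.mpr
    nlinarith [abs_nonneg t, hεH]
  -- pointwise bound on dv
  have hdvb : ∀ t, |dv t| ≤ (4 + C₀) * Real.exp (-|t|) := by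
    intro t
    calc |dv t| ≤ |wAC t| + |ε * d t| := abs_add_le _ _
      _ ≤ 4 * Real.exp (-|t|) + C₀ * Real.exp (-|t|) := by
          apply add_le_add
          · rw [abs_of_nonneg (wAC_nonneg t)]; exact wAC_le t
          · rw [abs_mul, abs_of_pos hε0]
            calc ε * |d t| ≤ 1 * (C₀ * Real.exp (-|t|)) := by
                  apply mul_le_mul hε1 (hdb t) (abs_nonneg _) one_pos.le
              _ = C₀ * Real.exp (-|t|) := one_mul _
      _ = (4 + C₀) * Real.exp (-|t|) := by ring
  -- bound for first integrand
  have hb1 : ∀ t, |dv t ^ 2 * E t| ≤ (4 + C₀)^2 * Real.exp (-|t|) := by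
    intro t
    have h1 : dv t ^ 2 ≤ ((4 + C₀) * Real.exp (-|t|))^2 := by
      rw [← sq_abs (dv t)]
      exact pow_le_pow_left₀ (abs_nonneg _) (hdvb t) 2
    rw [abs_mul, abs_of_pos (hEpos t), abs_of_nonneg (sq_nonneg _)]
    calc dv t ^ 2 * E t ≤ ((4 + C₀) * Real.exp (-|t|))^2 * Real.exp (|t|/4) := by
          apply mul_le_mul h1 (hEle t) (hEpos t).le (by positivity)
      _ = (4 + C₀)^2 * (Real.exp (-(2*|t|)) * Real.exp (|t|/4)) := by
          rw [mul_pow, ← Real.exp_nat_mul]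
          norm_num
          ring_nf
      _ ≤ (4 + C₀)^2 * Real.exp (-|t|) := by
          have := pe0 (abs_nonneg t)
          nlinarith [sq_nonneg (4 + C₀)]
  have hb2 : ∀ t, |t * dv t ^ 2 * E t| ≤ (4 * (4 + C₀)^2) * Real.exp (-|t|) := by
    intro t
    have h1 : dv t ^ 2 ≤ ((4 + C₀) * Real.exp (-|t|))^2 := by
      rw [← sq_abs (dv t)]
      exact pow_le_pow_left₀ (abs_nonneg _) (hdvb t) 2
    rw [abs_mul, abs_mul, abs_of_pos (hEpos t), abs_of_nonneg (sq_nonneg (dv t))]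
    calc |t| * dv t ^ 2 * E t
        ≤ |t| * (((4 + C₀) * Real.exp (-|t|))^2 * Real.exp (|t|/4)) := by
          rw [mul_assoc]
          apply mul_le_mul_of_nonneg_left _ (abs_nonneg t)
          apply mul_le_mul h1 (hEle t) (hEpos t).le (by positivity)
      _ = (4 + C₀)^2 * (|t| * (Real.exp (-(2*|t|)) * Real.exp (|t|/4))) := by
          rw [mul_pow, ← Real.exp_nat_mul]
          norm_num
          ring_nf
      _ ≤ (4 + C₀)^2 * (4 * Real.exp (-|t|)) := by
          apply mul_le_mul_of_nonneg_left (pe1 (abs_nonneg t)) (by positivity)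
      _ = (4 * (4 + C₀)^2) * Real.exp (-|t|) := by ring
  -- the two integrands, rewritten
  have hfun1 : (fun t : ℝ => (deriv (fun x => vStar x + ε * v₁ x) t) ^ 2 *
      Real.exp (-(ε * H * t))) = fun t => dv t ^ 2 * E t := by
    funext t; rw [hderiv t]
  have hfun2 : (fun t : ℝ => t * (deriv (fun x => vStar x + ε * v₁ x) t) ^ 2 *
      Real.exp (-(ε * H * t))) = fun t => t * dv t ^ 2 * E t := by
    funext t; rw [hderiv t]
  have hint1 : Integrable (fun t => dv t ^ 2 * E t) :=
    integrable_dom ((hcontdv.pow 2).mul hcontE) hb1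
  have hint2 : Integrable (fun t => t * dv t ^ 2 * E t) :=
    integrable_dom ((continuous_id.mul (hcontdv.pow 2)).mul hcontE) hb2
  -- denominator lower bound
  have hptw : ∀ t ∈ Set.Icc (-1:ℝ) 1, (1:ℝ)/2048 ≤ dv t ^ 2 * E t := by
    intro t ht
    have habs : |t| ≤ 1 := abs_le.mpr ⟨ht.1, ht.2⟩
    have h1 : (1:ℝ)/32 ≤ dv t := by
      have hw := wAC_ge t habs
      have hd' : |ε * d t| ≤ 1/32 := by
        rw [abs_mul, abs_of_pos hε0]
        calc ε * |d t| ≤ ε * (C₀ * Real.exp (-|t|)) :=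
              mul_le_mul_of_nonneg_left (hdb t) hε0.le
          _ ≤ ε * (C₀ * 1) := by
              apply mul_le_mul_of_nonneg_left _ hε0.le
              apply mul_le_mul_of_nonneg_left _ hC₀.le
              simpa using Real.exp_le_one_iff.mpr (by simpa using neg_nonpos.mpr (abs_nonneg t))
          _ = ε * C₀ := by ring
          _ ≤ 1/32 := hεC
      have := neg_abs_le (ε * d t)
      simp only [hdv]
      nlinarith [abs_le.mp hd']
    have h2 : (1:ℝ)/1024 ≤ dv t ^ 2 := by nlinarith
    have h3 : (1:ℝ)/2 ≤ E t := by
      have hle : -(ε * H * t) ≥ -(1/4) := by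
        have h1' : ε * H * t ≤ |ε * H * t| := le_abs_self _
        have h2' : |ε * H * t| = ε * |H| * |t| := by
          rw [abs_mul, abs_mul, abs_of_pos hε0]
        nlinarith [abs_nonneg H, mul_le_mul_of_nonneg_left habs (mul_nonneg hε0.le (abs_nonneg H))]
      calc (1:ℝ)/2 ≤ 1 + (-(1/4)) := by norm_num
        _ ≤ Real.exp (-(1/4)) := by linarith [Real.add_one_le_exp (-(1/4):ℝ)]
        _ ≤ E t := Real.exp_le_exp.mpr hle
    nlinarith [hEpos t]
  have hden : (1:ℝ)/1024 ≤ ∫ t, dv t ^ 2 * E t := by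
    have hset : (1:ℝ)/2048 * (volume (Set.Icc (-1:ℝ) 1)).toReal
        ≤ ∫ t in Set.Icc (-1:ℝ) 1, dv t ^ 2 * E t :=
      by have := setIntegral_ge_of_const_le measurableSet_Icc
           (by rw [Real.volume_Icc]; exact ENNReal.ofReal_ne_top)
           hptw hint1.integrableOn
         rw [smul_eq_mul, mul_comm] at this; exact this
    have hvol : (volume (Set.Icc (-1:ℝ) 1)).toReal = 2 := by
      rw [Real.volume_Icc]
      norm_num
    rw [hvol] at hset
    have hmono : ∫ t in Set.Icc (-1:ℝ) 1, dv t ^ 2 * E t ≤ ∫ t, dv t ^ 2 * E t := by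
      apply setIntegral_le_integral hint1
      filter_upwards with t
      positivity
    linarith
  have hdenpos : 0 < ∫ t, dv t ^ 2 * E t := lt_of_lt_of_le (by norm_num) hden
  refine ⟨hfun1 ▸ hint1, hfun2 ▸ hint2, hfun1 ▸ hdenpos, ?_⟩
  -- numerator bound
  set f₁ : ℝ → ℝ := fun t => t * wAC t ^ 2 * (E t - 1) with hf₁
  set f₂ : ℝ → ℝ := fun t => t * wAC t ^ 2 with hf₂
  set f₃ : ℝ → ℝ := fun t => ε * (t * (2 * wAC t * d t + ε * d t ^ 2) * E t) with hf₃
  have hsplit : ∀ t, t * dv t ^ 2 * E t = f₁ t + f₂ t + f₃ t := by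
    intro t
    simp only [hf₁, hf₂, hf₃, hdv]
    ring
  have hbf₁ : ∀ t, |f₁ t| ≤ ε * (256 * |H|) * Real.exp (-|t|) := by
    intro t
    have hw2 : wAC t ^ 2 ≤ 16 * Real.exp (-(2*|t|)) := by
      have h := wAC_le t
      have h0 := wAC_nonneg t
      have hm : wAC t * wAC t ≤ (4 * Real.exp (-|t|)) * (4 * Real.exp (-|t|)) :=
        mul_le_mul h h h0 (by positivity)
      have he := sq_exp_neg |t|
      nlinarith
    have hE1 := hEsub t
    simp only [hf₁]
    rw [abs_mul, abs_mul, abs_of_nonneg (sq_nonneg (wAC t))]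
    calc |t| * wAC t ^ 2 * |E t - 1|
        ≤ |t| * (16 * Real.exp (-(2*|t|))) * (ε * |H| * |t| * Real.exp (|t|/4)) := by
          apply mul_le_mul (mul_le_mul_of_nonneg_left hw2 (abs_nonneg t)) hE1
            (abs_nonneg _) (by positivity)
      _ = ε * (16 * |H|) * (|t| * (|t| * (Real.exp (-(2*|t|)) * Real.exp (|t|/4)))) := by ring
      _ ≤ ε * (16 * |H|) * (16 * Real.exp (-|t|)) := by
          apply mul_le_mul_of_nonneg_left (pe2 (abs_nonneg t)) (by positivity)
      _ = ε * (256 * |H|) * Real.exp (-|t|) := by ring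
  have hbf₂ : ∀ t, |f₂ t| ≤ 64 * Real.exp (-|t|) := by
    intro t
    have hw2 : wAC t ^ 2 ≤ 16 * Real.exp (-(2*|t|)) := by
      have h := wAC_le t
      have h0 := wAC_nonneg t
      have hm : wAC t * wAC t ≤ (4 * Real.exp (-|t|)) * (4 * Real.exp (-|t|)) :=
        mul_le_mul h h h0 (by positivity)
      have he := sq_exp_neg |t|
      nlinarith
    simp only [hf₂]
    rw [abs_mul, abs_of_nonneg (sq_nonneg (wAC t))]
    have hexp1 : (1:ℝ) ≤ Real.exp (|t|/4) := Real.one_le_exp (by positivity)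
    calc |t| * wAC t ^ 2 ≤ |t| * (16 * Real.exp (-(2*|t|))) :=
          mul_le_mul_of_nonneg_left hw2 (abs_nonneg t)
      _ ≤ |t| * (16 * (Real.exp (-(2*|t|)) * Real.exp (|t|/4))) := by
          have := Real.exp_pos (-(2*|t|))
          apply mul_le_mul_of_nonneg_left _ (abs_nonneg t)
          nlinarith
      _ = 16 * (|t| * (Real.exp (-(2*|t|)) * Real.exp (|t|/4))) := by ring
      _ ≤ 16 * (4 * Real.exp (-|t|)) :=
          mul_le_mul_of_nonneg_left (pe1 (abs_nonneg t)) (by norm_num)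
      _ = 64 * Real.exp (-|t|) := by ring
  have hbf₃ : ∀ t, |f₃ t| ≤ ε * (32*C₀ + 4*C₀^2) * Real.exp (-|t|) := by
    intro t
    simp only [hf₃]
    rw [abs_mul, abs_of_pos hε0, abs_mul, abs_mul]
    have hg : |2 * wAC t * d t + ε * d t ^ 2| ≤ (8*C₀ + C₀^2) * (Real.exp (-|t|) * Real.exp (-|t|)) := by
      have h1 : |2 * wAC t * d t| ≤ 8 * C₀ * (Real.exp (-|t|) * Real.exp (-|t|)) := by
        rw [abs_mul, abs_mul, abs_two, abs_of_nonneg (wAC_nonneg t)]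
        calc 2 * wAC t * |d t| ≤ 2 * (4 * Real.exp (-|t|)) * (C₀ * Real.exp (-|t|)) := by
              apply mul_le_mul (mul_le_mul_of_nonneg_left (wAC_le t) (by norm_num)) (hdb t)
                (abs_nonneg _) (by positivity)
          _ = 8 * C₀ * (Real.exp (-|t|) * Real.exp (-|t|)) := by ring
      have h2 : |ε * d t ^ 2| ≤ C₀^2 * (Real.exp (-|t|) * Real.exp (-|t|)) := by
        rw [abs_mul, abs_of_pos hε0, abs_of_nonneg (sq_nonneg (d t))]
        have hd2 : d t ^ 2 ≤ (C₀ * Real.exp (-|t|))^2 := by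
          rw [← sq_abs (d t)]
          exact pow_le_pow_left₀ (abs_nonneg _) (hdb t) 2
        calc ε * d t ^ 2 ≤ 1 * (C₀ * Real.exp (-|t|))^2 := by
              apply mul_le_mul hε1 hd2 (sq_nonneg _) one_pos.le
          _ = C₀^2 * (Real.exp (-|t|) * Real.exp (-|t|)) := by ring
      calc |2 * wAC t * d t + ε * d t ^ 2| ≤ |2 * wAC t * d t| + |ε * d t ^ 2| := abs_add_le _ _
        _ ≤ (8*C₀ + C₀^2) * (Real.exp (-|t|) * Real.exp (-|t|)) := by linarith
    have hexp2 : Real.exp (-|t|) * Real.exp (-|t|) = Real.exp (-(2*|t|)) := by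
      rw [← Real.exp_add]; ring_nf
    rw [hexp2] at hg
    calc ε * (|t| * |2 * wAC t * d t + ε * d t ^ 2| * |E t|)
        ≤ ε * (|t| * ((8*C₀ + C₀^2) * Real.exp (-(2*|t|))) * Real.exp (|t|/4)) := by
          apply mul_le_mul_of_nonneg_left _ hε0.le
          apply mul_le_mul (mul_le_mul_of_nonneg_left hg (abs_nonneg t))
            (by rw [abs_of_pos (hEpos t)]; exact hEle t) (abs_nonneg _) (by positivity)
      _ = ε * (8*C₀ + C₀^2) * (|t| * (Real.exp (-(2*|t|)) * Real.exp (|t|/4))) := by ring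
      _ ≤ ε * (8*C₀ + C₀^2) * (4 * Real.exp (-|t|)) := by
          apply mul_le_mul_of_nonneg_left (pe1 (abs_nonneg t)) (by positivity)
      _ = ε * (32*C₀ + 4*C₀^2) * Real.exp (-|t|) := by ring
  have hif₁ : Integrable f₁ :=
    integrable_dom ((continuous_id.mul (continuous_wAC.pow 2)).mul
      (hcontE.sub continuous_const)) hbf₁
  have hif₂ : Integrable f₂ := integrable_dom (continuous_id.mul (continuous_wAC.pow 2)) hbf₂
  have hif₃ : Integrable f₃ :=
    integrable_dom (continuous_const.mul ((continuous_id.mul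
      ((((continuous_const.mul continuous_wAC).mul hcontd)).add
        (continuous_const.mul (hcontd.pow 2)))).mul hcontE)) hbf₃
  have hnum_split : ∫ t, t * dv t ^ 2 * E t = (∫ t, f₁ t) + (∫ t, f₂ t) + (∫ t, f₃ t) := by
    have hi12 : Integrable (fun t => f₁ t + f₂ t) := hif₁.add hif₂
    have e2 : (∫ t, (f₁ t + f₂ t + f₃ t)) = (∫ t, (f₁ t + f₂ t)) + ∫ t, f₃ t :=
      integral_add hi12 hif₃
    have e1 : (∫ t, (f₁ t + f₂ t)) = (∫ t, f₁ t) + ∫ t, f₂ t := integral_add hif₁ hif₂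
    rw [integral_congr_ae (by filter_upwards with t using hsplit t), e2, e1]
  have hf₂zero : ∫ t, f₂ t = 0 := by
    apply integral_odd_zero
    intro t
    simp only [hf₂]
    rw [wAC_even]
    ring
  have hnum : |∫ t, t * dv t ^ 2 * E t| ≤ ε * ((256 * |H| + (32*C₀ + 4*C₀^2)) * J) := by
    rw [hnum_split, hf₂zero, add_zero]
    calc |(∫ t, f₁ t) + (∫ t, f₃ t)| ≤ |∫ t, f₁ t| + |∫ t, f₃ t| := abs_add_le _ _
      _ ≤ ε * (256 * |H|) * J + ε * (32*C₀ + 4*C₀^2) * J :=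
          add_le_add (abs_integral_dom hif₁ hbf₁) (abs_integral_dom hif₃ hbf₃)
      _ = ε * ((256 * |H| + (32*C₀ + 4*C₀^2)) * J) := by ring
  -- final bound
  rw [hfun1, hfun2]
  rw [abs_mul, abs_neg, abs_of_pos (by positivity : (0:ℝ) < 1/ε), abs_div,
    abs_of_pos hdenpos]
  have hstep : |∫ t, t * dv t ^ 2 * E t| / (∫ t, dv t ^ 2 * E t)
      ≤ ε * ((256 * |H| + (32*C₀ + 4*C₀^2)) * J) * 1024 := by
    rw [div_le_iff₀ hdenpos]
    calc |∫ t, t * dv t ^ 2 * E t| ≤ ε * ((256 * |H| + (32*C₀ + 4*C₀^2)) * J) := hnum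
      _ = ε * ((256 * |H| + (32*C₀ + 4*C₀^2)) * J) * 1024 * (1/1024) := by ring
      _ ≤ ε * ((256 * |H| + (32*C₀ + 4*C₀^2)) * J) * 1024 * ∫ t, dv t ^ 2 * E t := by
          apply mul_le_mul_of_nonneg_left hden (by positivity)
  calc 1/ε * (|∫ t, t * dv t ^ 2 * E t| / (∫ t, dv t ^ 2 * E t))
      ≤ 1/ε * (ε * ((256 * |H| + (32*C₀ + 4*C₀^2)) * J) * 1024) :=
        mul_le_mul_of_nonneg_left hstep (by positivity)
    _ = 1024 * ((256*|H| + (32*C₀ + 4*C₀^2)) * J) := by field_simp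
    _ ≤ 1024 * ((256*|H| + (32*C₀ + 4*C₀^2)) * J) + 1 := by linarith
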